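/- Let f = (f₁,...,fₙ) : ℝ → ℝⁿ with each f_j measurable, and suppose that lim_{T→∞} (1/T) ∫₀^T e^{2πi(β·f(t))} dt = 0 for all nonzero β ∈ ℝⁿ. Then for every almost periodic function w : ℝⁿ → ℂ, the composite w ∘ f : ℝ → ℂ has a mean value, and M(w ∘ f) = M(w). -/

import Mathlib

open MeasureTheory Filter

/-- A bounded measurable `w : ℝⁿ → ℂ` has *mean value* `M` if
`T⁻ⁿ ∫_{[0,T]ⁿ} w(s) ds → M` as `T → ∞`. -/
def HasMeanValue {n : ℕ} (w : (Fin n → ℝ) → ℂ) (M : ℂ) : Prop :=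
  Tendsto (fun T : ℝ =>
      ((T : ℂ) ^ n)⁻¹ * ∫ s in Set.Icc (0 : Fin n → ℝ) (fun _ => T), w s)
    atTop (nhds M)

/-- A bounded measurable `g : ℝ → ℂ` has *mean value* `M` if
`T⁻¹ ∫_0^T g(t) dt → M` as `T → ∞`. -/
def HasMeanValue1 (g : ℝ → ℂ) (M : ℂ) : Prop :=
  Tendsto (fun T : ℝ => (T : ℂ)⁻¹ * ∫ t in Set.Ioc (0 : ℝ) T, g t) atTop (nhds M)

/-- A *trigonometric polynomial* on `ℝⁿ` is a finite `ℂ`-linear combination of the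
characters `s ↦ e^{i(α·s)}`, `α ∈ ℝⁿ`. -/
def IsTrigPoly {n : ℕ} (p : (Fin n → ℝ) → ℂ) : Prop :=
  ∃ (A : Finset (Fin n → ℝ)) (c : (Fin n → ℝ) → ℂ),
    ∀ s, p s = ∑ α ∈ A, c α * Complex.exp (Complex.I * (↑(∑ i, α i * s i) : ℂ))

/-- `w : ℝⁿ → ℂ` is *almost periodic* if it is a uniform limit of trigonometric
polynomials. -/
def AlmostPeriodic {n : ℕ} (w : (Fin n → ℝ) → ℂ) : Prop :=
  ∀ ε : ℝ, 0 < ε → ∃ p, IsTrigPoly p ∧ ∀ s, ‖w s - p s‖ ≤ ε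



lemma norm_exp_I_mul_ofReal (x : ℝ) : ‖Complex.exp (Complex.I * x)‖ = 1 := by
  simp [Complex.norm_exp]

lemma mean1_const : Tendsto (fun T : ℝ => (T : ℂ)⁻¹ * ∫ _t in Set.Ioc (0 : ℝ) T, (1:ℂ))
    atTop (nhds 1) := by
  refine Tendsto.congr' ?_ (tendsto_const_nhds : Tendsto (fun _ : ℝ => (1:ℂ)) atTop (nhds 1))
  filter_upwards [eventually_gt_atTop (0:ℝ)] with T hT
  rw [setIntegral_const, measureReal_def, Real.volume_Ioc, sub_zero, ENNReal.toReal_ofReal hT.le]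
  rw [Complex.real_smul, mul_one]
  have : (T:ℂ) ≠ 0 := Complex.ofReal_ne_zero.mpr hT.ne'
  field_simp

lemma mean1_exp (c : ℝ) :
    Tendsto (fun T : ℝ => (T:ℂ)⁻¹ * ∫ t in Set.Ioc (0:ℝ) T, Complex.exp (Complex.I * c * t))
      atTop (nhds (if c = 0 then (1:ℂ) else 0)) := by
  by_cases hc : c = 0
  · rw [if_pos hc]; subst hc
    simpa using mean1_const
  · rw [if_neg hc]
    have hc' : Complex.I * (c:ℂ) ≠ 0 := mul_ne_zero Complex.I_ne_zero (Complex.ofReal_ne_zero.mpr hc)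
    refine squeeze_zero_norm' (a := fun T : ℝ => (2 / |c|) * T⁻¹) ?_ ?_
    · filter_upwards [eventually_gt_atTop (0:ℝ)] with T hT
      have h1 : ∫ t in Set.Ioc (0:ℝ) T, Complex.exp (Complex.I * c * t)
          = (Complex.exp (Complex.I * c * T) - 1) / (Complex.I * c) := by
        rw [← intervalIntegral.integral_of_le hT.le]
        simpa using integral_exp_mul_complex (a := (0:ℝ)) (b := T) hc'
      rw [h1, norm_mul, norm_inv, norm_div]
      have he : ‖Complex.exp (Complex.I * c * T) - 1‖ ≤ 2 := by
        calc ‖Complex.exp (Complex.I * c * T) - 1‖ ≤ ‖Complex.exp (Complex.I * c * T)‖ + ‖(1:ℂ)‖ :=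
          norm_sub_le _ _
        _ ≤ 2 := by
          have : Complex.I * c * T = Complex.I * ((c*T : ℝ) : ℂ) := by push_cast; ring
          rw [this, norm_exp_I_mul_ofReal]; norm_num
      have hic : ‖Complex.I * (c:ℂ)‖ = |c| := by
        simp
      rw [hic]
      have hTn : ‖(T:ℂ)‖ = T := by
        rw [Complex.norm_real, Real.norm_eq_abs, abs_of_pos hT]
      rw [hTn, mul_comm]
      gcongr
    · have := (tendsto_inv_atTop_zero (𝕜 := ℝ)).const_mul (2 / |c|)
      simpa using this

lemma norm_exp_I_mul_ofReal' (x : ℝ) : ‖Complex.exp (Complex.I * x)‖ = 1 := by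
  simp [Complex.norm_exp]

lemma char_continuous {n : ℕ} (α : Fin n → ℝ) :
    Continuous fun s : Fin n → ℝ => Complex.exp (Complex.I * (↑(∑ i, α i * s i) : ℂ)) :=
  Complex.continuous_exp.comp <| continuous_const.mul <| Complex.continuous_ofReal.comp <|
    continuous_finset_sum _ fun i _ => continuous_const.mul (continuous_apply i)

lemma trig_continuous {n : ℕ} {p : (Fin n → ℝ) → ℂ}
    (hp : ∃ (A : Finset (Fin n → ℝ)) (c : (Fin n → ℝ) → ℂ),
      ∀ s, p s = ∑ α ∈ A, c α * Complex.exp (Complex.I * (↑(∑ i, α i * s i) : ℂ))) :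
    Continuous p := by
  obtain ⟨A, c, hc⟩ := hp
  have : p = fun s => ∑ α ∈ A, c α * Complex.exp (Complex.I * (↑(∑ i, α i * s i) : ℂ)) :=
    funext hc
  rw [this]
  exact continuous_finset_sum _ fun α _ => continuous_const.mul (char_continuous α)

lemma trig_bound {n : ℕ} {p : (Fin n → ℝ) → ℂ}
    (hp : ∃ (A : Finset (Fin n → ℝ)) (c : (Fin n → ℝ) → ℂ),
      ∀ s, p s = ∑ α ∈ A, c α * Complex.exp (Complex.I * (↑(∑ i, α i * s i) : ℂ))) :
    ∃ C : ℝ, ∀ s, ‖p s‖ ≤ C := by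
  obtain ⟨A, c, hc⟩ := hp
  refine ⟨∑ α ∈ A, ‖c α‖, fun s => ?_⟩
  rw [hc s]
  refine (norm_sum_le _ _).trans (Finset.sum_le_sum fun α _ => ?_)
  rw [norm_mul, norm_exp_I_mul_ofReal', mul_one]

lemma avg_line_bound {g h : ℝ → ℂ} {ε T : ℝ} (hT : 0 < T)
    (hg : IntegrableOn g (Set.Ioc 0 T)) (hh : IntegrableOn h (Set.Ioc 0 T))
    (hε : ∀ t, ‖g t - h t‖ ≤ ε) :
    ‖(T:ℂ)⁻¹ * (∫ t in Set.Ioc (0:ℝ) T, g t) - (T:ℂ)⁻¹ * (∫ t in Set.Ioc (0:ℝ) T, h t)‖ ≤ ε := by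
  rw [← mul_sub, ← integral_sub hg hh, norm_mul, norm_inv]
  have hTn : ‖(T:ℂ)‖ = T := by rw [Complex.norm_real, Real.norm_eq_abs, abs_of_pos hT]
  rw [hTn]
  have hb : ‖∫ t in Set.Ioc (0:ℝ) T, (g t - h t)‖ ≤ ε * T := by
    have := norm_setIntegral_le_of_norm_le_const (μ := volume) (s := Set.Ioc (0:ℝ) T)
      (f := fun t => g t - h t) (C := ε)
      (by rw [Real.volume_Ioc]; exact ENNReal.ofReal_lt_top)
      (fun t _ => hε t)
    simpa [measureReal_def, Real.volume_Ioc, ENNReal.toReal_ofReal hT.le] using this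
  calc T⁻¹ * ‖∫ t in Set.Ioc (0:ℝ) T, (g t - h t)‖ ≤ T⁻¹ * (ε * T) := by
        gcongr
  _ = ε := by field_simp

lemma avg_box_bound {n : ℕ} {g h : (Fin n → ℝ) → ℂ} {ε T : ℝ} (hT : 0 < T)
    (hg : IntegrableOn g (Set.Icc (0 : Fin n → ℝ) (fun _ => T)))
    (hh : IntegrableOn h (Set.Icc (0 : Fin n → ℝ) (fun _ => T)))
    (hε : ∀ s, ‖g s - h s‖ ≤ ε) :
    ‖((T:ℂ)^n)⁻¹ * (∫ s in Set.Icc (0 : Fin n → ℝ) (fun _ => T), g s)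
      - ((T:ℂ)^n)⁻¹ * (∫ s in Set.Icc (0 : Fin n → ℝ) (fun _ => T), h s)‖ ≤ ε := by
  rw [← mul_sub, ← integral_sub hg hh, norm_mul, norm_inv, norm_pow]
  have hTn : ‖(T:ℂ)‖ = T := by rw [Complex.norm_real, Real.norm_eq_abs, abs_of_pos hT]
  rw [hTn]
  have hvol : volume (Set.Icc (0 : Fin n → ℝ) (fun _ => T)) < ⊤ := by
    rw [Real.volume_Icc_pi]
    exact WithTop.prod_lt_top fun i _ => ENNReal.ofReal_lt_top
  have hvolR : (volume (Set.Icc (0 : Fin n → ℝ) (fun _ => T))).toReal = T^n := by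
    rw [Real.volume_Icc_pi, ENNReal.toReal_prod]
    simp [ENNReal.toReal_ofReal hT.le, Finset.prod_const]
  have hb : ‖∫ s in Set.Icc (0 : Fin n → ℝ) (fun _ => T), (g s - h s)‖ ≤ ε * T^n := by
    have := norm_setIntegral_le_of_norm_le_const (μ := volume)
      (s := Set.Icc (0 : Fin n → ℝ) (fun _ => T))
      (f := fun s => g s - h s) (C := ε) hvol
      (fun s _ => hε s)
    rwa [measureReal_def, hvolR] at this
  calc (T^n)⁻¹ * ‖∫ s in Set.Icc (0 : Fin n → ℝ) (fun _ => T), (g s - h s)‖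
      ≤ (T^n)⁻¹ * (ε * T^n) := by gcongr
  _ = ε := by
      have : (T:ℝ)^n ≠ 0 := by positivity
      field_simp

lemma mean_box_char {n : ℕ} (α : Fin n → ℝ)
    (hmean1 : ∀ c : ℝ, Tendsto (fun T : ℝ => (T:ℂ)⁻¹ * ∫ t in Set.Ioc (0:ℝ) T,
      Complex.exp (Complex.I * c * t)) atTop (nhds (if c = 0 then (1:ℂ) else 0))) :
    Tendsto (fun T : ℝ =>
      ((T : ℂ) ^ n)⁻¹ * ∫ s in Set.Icc (0 : Fin n → ℝ) (fun _ => T),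
        Complex.exp (Complex.I * (↑(∑ i, α i * s i) : ℂ)))
      atTop (nhds (if α = 0 then 1 else 0)) := by
  have hfun : ∀ T : ℝ,
      ((T:ℂ)^n)⁻¹ * ∫ s in Set.Icc (0 : Fin n → ℝ) (fun _ => T),
        Complex.exp (Complex.I * (↑(∑ i, α i * s i) : ℂ))
      = ∏ j, ((T:ℂ)⁻¹ * ∫ t in Set.Ioc (0:ℝ) T, Complex.exp (Complex.I * (α j) * t)) := by
    intro T
    have h1 : (fun s : Fin n → ℝ => Complex.exp (Complex.I * (↑(∑ i, α i * s i) : ℂ)))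
        = fun s => ∏ i, Complex.exp (Complex.I * (α i) * (s i)) := by
      funext s
      rw [← Complex.exp_sum]
      congr 1
      push_cast
      rw [Finset.mul_sum]
      exact Finset.sum_congr rfl fun i _ => by ring
    rw [h1]
    have h2 : Set.Icc (0 : Fin n → ℝ) (fun _ => T)
        = Set.pi Set.univ (fun _ : Fin n => Set.Icc (0:ℝ) T) := (Set.pi_univ_Icc _ _).symm
    rw [h2, ← integral_indicator (MeasurableSet.univ_pi fun _ => measurableSet_Icc)]
    have h3 : (Set.pi Set.univ fun _ : Fin n => Set.Icc (0:ℝ) T).indicator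
          (fun s => ∏ i, Complex.exp (Complex.I * (α i) * (s i)))
        = fun s => ∏ i, (Set.Icc (0:ℝ) T).indicator
            (fun t => Complex.exp (Complex.I * (α i) * t)) (s i) := by
      funext s
      by_cases hs : s ∈ Set.pi Set.univ fun _ : Fin n => Set.Icc (0:ℝ) T
      · rw [Set.indicator_of_mem hs]
        exact Finset.prod_congr rfl fun i _ =>
          (Set.indicator_of_mem (hs i trivial)
            (fun t : ℝ => Complex.exp (Complex.I * (α i) * t))).symm
      · rw [Set.indicator_of_notMem hs]
        obtain ⟨j, hj⟩ : ∃ j, s j ∉ Set.Icc (0:ℝ) T := by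
          rw [Set.mem_univ_pi] at hs; exact not_forall.mp hs
        exact (Finset.prod_eq_zero (Finset.mem_univ j)
          (Set.indicator_of_notMem hj _)).symm
    rw [h3]
    beta_reduce
    rw [MeasureTheory.volume_pi, MeasureTheory.integral_fintype_prod_eq_prod
      (f := fun i t => (Set.Icc (0:ℝ) T).indicator
        (fun t => Complex.exp (Complex.I * (α i) * t)) t)]
    have h4 : ((T:ℂ)^n)⁻¹ = ∏ _j : Fin n, (T:ℂ)⁻¹ := by
      simp [Finset.prod_const]
    rw [h4, ← Finset.prod_mul_distrib]
    exact Finset.prod_congr rfl fun j _ => by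
      rw [integral_indicator measurableSet_Icc, integral_Icc_eq_integral_Ioc]
  rw [show (if α = 0 then (1:ℂ) else 0) = ∏ j, (if α j = 0 then (1:ℂ) else 0) by
    by_cases hα : α = 0
    · simp [hα]
    · obtain ⟨j, hj⟩ := Function.ne_iff.mp hα
      have hj' : α j ≠ 0 := by simpa using hj
      rw [if_neg hα]
      exact (Finset.prod_eq_zero (f := fun j => if α j = 0 then (1:ℂ) else 0) (Finset.mem_univ j) (if_neg hj')).symm]
  refine Tendsto.congr (fun T => (hfun T).symm) ?_
  exact tendsto_finset_prod _ fun j _ => hmean1 (α j)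

/-- If `f = (f₁,…,fₙ) : ℝ → ℝⁿ` is measurable and
`(1/T)∫_0^T e^{2πi(β·f(t))} dt → 0` for all nonzero `β ∈ ℝⁿ`, then for every almost
periodic `w : ℝⁿ → ℂ`, the composite `w ∘ f` has a mean value, equal to `M(w)`. -/
theorem stmt6 {n : ℕ} (hn : 1 ≤ n) (f : ℝ → Fin n → ℝ)
    (hf : ∀ j, Measurable (fun t => f t j))
    (hud : ∀ β : Fin n → ℝ, β ≠ 0 →
      HasMeanValue1
        (fun t => Complex.exp (2 * (↑Real.pi : ℂ) * Complex.I *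
          (↑(∑ i, β i * f t i) : ℂ))) 0)
    (w : (Fin n → ℝ) → ℂ) (hap : AlmostPeriodic w) :
    ∃ M : ℂ, HasMeanValue w M ∧ HasMeanValue1 (fun t => w (f t)) M := by
  classical
  have hfmeas : Measurable f := measurable_pi_iff.mpr hf
  -- integrability of bounded continuous compositions on segments
  have hline_int : ∀ (g : (Fin n → ℝ) → ℂ), Continuous g → (∃ C, ∀ s, ‖g s‖ ≤ C) →
      ∀ T : ℝ, IntegrableOn (fun t => g (f t)) (Set.Ioc (0:ℝ) T) := by
    rintro g hg ⟨C, hC⟩ T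
    refine Measure.integrableOn_of_bounded ?_ ?_ (ae_of_all _ fun t => hC (f t))
    · rw [Real.volume_Ioc]; exact ENNReal.ofReal_ne_top
    · exact (hg.measurable.comp hfmeas).aestronglyMeasurable
  -- mean values of characters composed with f
  have hchar1 : ∀ α : Fin n → ℝ,
      HasMeanValue1 (fun t => Complex.exp (Complex.I * (↑(∑ i, α i * f t i) : ℂ)))
        (if α = 0 then 1 else 0) := by
    intro α
    by_cases hα : α = 0
    · rw [if_pos hα]; subst hα
      unfold HasMeanValue1
      have he : (fun t : ℝ =>
          Complex.exp (Complex.I * (↑(∑ i, (0 : Fin n → ℝ) i * f t i) : ℂ))) = fun _ => 1 := by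
        funext t; simp
      rw [he]
      exact mean1_const
    · rw [if_neg hα]
      have h2π : (2 * Real.pi : ℝ) ≠ 0 := by positivity
      have hβ : (fun i => (2 * Real.pi)⁻¹ * α i) ≠ (0 : Fin n → ℝ) := by
        obtain ⟨j, hj⟩ := Function.ne_iff.mp hα
        refine Function.ne_iff.mpr ⟨j, ?_⟩
        simp only [Pi.zero_apply]
        exact mul_ne_zero (inv_ne_zero h2π) (by simpa using hj)
      have key := hud _ hβ
      have heq : (fun t => Complex.exp (2 * (↑Real.pi : ℂ) * Complex.I *
            (↑(∑ i, (fun i => (2 * Real.pi)⁻¹ * α i) i * f t i) : ℂ)))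
          = fun t => Complex.exp (Complex.I * (↑(∑ i, α i * f t i) : ℂ)) := by
        funext t
        congr 1
        push_cast
        rw [Finset.mul_sum, Finset.mul_sum]
        refine Finset.sum_congr rfl fun i _ => ?_
        have hπ : (Real.pi : ℂ) ≠ 0 := Complex.ofReal_ne_zero.mpr Real.pi_ne_zero
        field_simp
      rwa [heq] at key
  -- mean values of trigonometric polynomials composed with f
  have hM1 : ∀ (A : Finset (Fin n → ℝ)) (c : (Fin n → ℝ) → ℂ),
      HasMeanValue1
        (fun t => ∑ α ∈ A, c α * Complex.exp (Complex.I * (↑(∑ i, α i * f t i) : ℂ)))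
        (∑ α ∈ A, c α * (if α = 0 then 1 else 0)) := by
    intro A c
    unfold HasMeanValue1
    have htd : Tendsto (fun T : ℝ => ∑ α ∈ A, c α *
        ((T:ℂ)⁻¹ * ∫ t in Set.Ioc (0:ℝ) T,
          Complex.exp (Complex.I * (↑(∑ i, α i * f t i) : ℂ))))
        atTop (nhds (∑ α ∈ A, c α * (if α = 0 then 1 else 0))) :=
      tendsto_finset_sum _ fun α _ => (hchar1 α).const_mul (c α)
    refine Tendsto.congr (fun T => ?_) htd
    have hint : ∀ α ∈ A, IntegrableOn
        (fun t => c α * Complex.exp (Complex.I * (↑(∑ i, α i * f t i) : ℂ)))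
        (Set.Ioc (0:ℝ) T) := by
      intro α _
      exact (hline_int _ (char_continuous α)
        ⟨1, fun s => le_of_eq (norm_exp_I_mul_ofReal' _)⟩ T).const_mul (c α)
    rw [integral_finset_sum A hint, Finset.mul_sum]
    exact Finset.sum_congr rfl fun α _ => by rw [MeasureTheory.integral_const_mul]; ring
  -- mean values of trigonometric polynomials on boxes
  have hMbox : ∀ (A : Finset (Fin n → ℝ)) (c : (Fin n → ℝ) → ℂ),
      HasMeanValue
        (fun s => ∑ α ∈ A, c α * Complex.exp (Complex.I * (↑(∑ i, α i * s i) : ℂ)))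
        (∑ α ∈ A, c α * (if α = 0 then 1 else 0)) := by
    intro A c
    unfold HasMeanValue
    have htd : Tendsto (fun T : ℝ => ∑ α ∈ A, c α *
        (((T:ℂ)^n)⁻¹ * ∫ s in Set.Icc (0 : Fin n → ℝ) (fun _ => T),
          Complex.exp (Complex.I * (↑(∑ i, α i * s i) : ℂ))))
        atTop (nhds (∑ α ∈ A, c α * (if α = 0 then 1 else 0))) :=
      tendsto_finset_sum _ fun α _ => (mean_box_char α mean1_exp).const_mul (c α)
    refine Tendsto.congr (fun T => ?_) htd
    have hint : ∀ α ∈ A, IntegrableOn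
        (fun s => c α * Complex.exp (Complex.I * (↑(∑ i, α i * s i) : ℂ)))
        (Set.Icc (0 : Fin n → ℝ) (fun _ => T)) := by
      intro α _
      exact ((char_continuous α).integrableOn_Icc).const_mul (c α)
    rw [integral_finset_sum A hint, Finset.mul_sum]
    exact Finset.sum_congr rfl fun α _ => by rw [MeasureTheory.integral_const_mul]; ring
  -- choose approximating trigonometric polynomials
  have hsel : ∀ k : ℕ, ∃ p, IsTrigPoly p ∧ ∀ s, ‖w s - p s‖ ≤ 1/((k:ℝ)+1) :=
    fun k => hap _ (by positivity)
  choose p hptrig hpw using hsel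
  have hpc : ∀ k, Continuous (p k) := fun k => trig_continuous (hptrig k)
  have hw_cont : Continuous w := by
    have hu : TendstoUniformly (fun k s => p k s) w atTop := by
      rw [Metric.tendstoUniformly_iff]
      intro ε hε
      obtain ⟨N, hN⟩ := exists_nat_one_div_lt hε
      filter_upwards [eventually_ge_atTop N] with k hk s
      have h1 : ‖w s - p k s‖ ≤ 1/((k:ℝ)+1) := hpw k s
      have h2 : (1:ℝ)/((k:ℝ)+1) ≤ 1/((N:ℝ)+1) := by
        gcongr
      rw [dist_eq_norm]
      exact lt_of_le_of_lt (h1.trans h2) hN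
    exact hu.continuous (Eventually.of_forall hpc).frequently
  obtain ⟨C0, hC0⟩ := trig_bound (hptrig 0)
  have hwb : ∀ s, ‖w s‖ ≤ C0 + 1 := by
    intro s
    calc ‖w s‖ = ‖(w s - p 0 s) + p 0 s‖ := by ring_nf
    _ ≤ ‖w s - p 0 s‖ + ‖p 0 s‖ := norm_add_le _ _
    _ ≤ 1 + C0 := add_le_add (by simpa using hpw 0 s) (hC0 s)
    _ = C0 + 1 := by ring
  -- integrability
  have hpline_int : ∀ k T, IntegrableOn (fun t => p k (f t)) (Set.Ioc (0:ℝ) T) :=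
    fun k T => hline_int _ (hpc k) (trig_bound (hptrig k)) T
  have hwline_int : ∀ T, IntegrableOn (fun t => w (f t)) (Set.Ioc (0:ℝ) T) :=
    fun T => hline_int w hw_cont ⟨C0+1, hwb⟩ T
  have hpbox_int : ∀ k T, IntegrableOn (p k) (Set.Icc (0 : Fin n → ℝ) (fun _ => T)) :=
    fun k T => (hpc k).integrableOn_Icc
  have hwbox_int : ∀ T, IntegrableOn w (Set.Icc (0 : Fin n → ℝ) (fun _ => T)) :=
    fun T => hw_cont.integrableOn_Icc
  -- mean values of the p k
  choose A c hAc using hptrig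
  set M : ℕ → ℂ := fun k => ∑ α ∈ A k, c k α * (if α = 0 then 1 else 0) with hMdef
  have hbox : ∀ k, HasMeanValue (p k) (M k) := by
    intro k
    have : p k = fun s => ∑ α ∈ A k, c k α *
        Complex.exp (Complex.I * (↑(∑ i, α i * s i) : ℂ)) := funext (hAc k)
    rw [this]
    exact hMbox (A k) (c k)
  have hline : ∀ k, HasMeanValue1 (fun t => p k (f t)) (M k) := by
    intro k
    have : (fun t => p k (f t)) = fun t => ∑ α ∈ A k, c k α *
        Complex.exp (Complex.I * (↑(∑ i, α i * f t i) : ℂ)) := funext fun t => hAc k (f t)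
    rw [this]
    exact hM1 (A k) (c k)
  -- the means form a Cauchy sequence
  have hdist : ∀ k l : ℕ, dist (M k) (M l) ≤ 1/((k:ℝ)+1) + 1/((l:ℝ)+1) := by
    intro k l
    have htd : Tendsto (fun T : ℝ =>
        ((T:ℂ)⁻¹ * ∫ t in Set.Ioc (0:ℝ) T, p k (f t))
          - ((T:ℂ)⁻¹ * ∫ t in Set.Ioc (0:ℝ) T, p l (f t))) atTop (nhds (M k - M l)) :=
      (hline k).sub (hline l)
    rw [dist_eq_norm]
    refine le_of_tendsto htd.norm ?_
    filter_upwards [eventually_gt_atTop (0:ℝ)] with T hT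
    refine avg_line_bound hT (hpline_int k T) (hpline_int l T) fun t => ?_
    calc ‖p k (f t) - p l (f t)‖
        = ‖(p k (f t) - w (f t)) + (w (f t) - p l (f t))‖ := by ring_nf
    _ ≤ ‖p k (f t) - w (f t)‖ + ‖w (f t) - p l (f t)‖ := norm_add_le _ _
    _ ≤ 1/((k:ℝ)+1) + 1/((l:ℝ)+1) := by
        refine add_le_add ?_ (hpw l (f t))
        rw [norm_sub_rev]
        exact hpw k (f t)
  have htend0 : Tendsto (fun N : ℕ => 1/((N:ℝ)+1) + 1/((N:ℝ)+1)) atTop (nhds 0) := by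
    have := (tendsto_one_div_add_atTop_nhds_zero_nat (𝕜 := ℝ)).add (tendsto_one_div_add_atTop_nhds_zero_nat (𝕜 := ℝ))
    simpa using this
  have hcauchy : CauchySeq M := by
    refine cauchySeq_of_le_tendsto_0 (fun N => 1/((N:ℝ)+1) + 1/((N:ℝ)+1)) ?_ htend0
    intro k l N hk hl
    refine (hdist k l).trans (add_le_add ?_ ?_) <;> gcongr <;> exact_mod_cast ‹_›
  obtain ⟨ML, hML⟩ := cauchySeq_tendsto_of_complete hcauchy
  refine ⟨ML, ?_, ?_⟩
  · -- box mean of w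
    unfold HasMeanValue
    rw [Metric.tendsto_nhds]
    intro ε hε
    have hε3 : (0:ℝ) < ε/3 := by positivity
    have h1 : ∀ᶠ k : ℕ in atTop, dist (M k) ML < ε/3 :=
      Tendsto.eventually_lt_const hε3 (tendsto_iff_dist_tendsto_zero.mp hML)
    have h2 : ∀ᶠ k : ℕ in atTop, 1/((k:ℝ)+1) < ε/3 :=
      Tendsto.eventually_lt_const hε3 tendsto_one_div_add_atTop_nhds_zero_nat
    obtain ⟨k, hk1, hk2⟩ := (h1.and h2).exists
    have h3 : ∀ᶠ T : ℝ in atTop, dist (((T:ℂ)^n)⁻¹ *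
        ∫ s in Set.Icc (0 : Fin n → ℝ) (fun _ => T), p k s) (M k) < ε/3 :=
      Tendsto.eventually_lt_const hε3 (tendsto_iff_dist_tendsto_zero.mp (hbox k))
    filter_upwards [eventually_gt_atTop (0:ℝ), h3] with T hT hTk
    have hfirst : dist (((T:ℂ)^n)⁻¹ *
        ∫ s in Set.Icc (0 : Fin n → ℝ) (fun _ => T), w s)
        (((T:ℂ)^n)⁻¹ * ∫ s in Set.Icc (0 : Fin n → ℝ) (fun _ => T), p k s) < ε/3 := by
      rw [dist_eq_norm]
      exact lt_of_le_of_lt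
        (avg_box_bound hT (hwbox_int T) (hpbox_int k T) (hpw k)) hk2
    calc dist (((T:ℂ)^n)⁻¹ * ∫ s in Set.Icc (0 : Fin n → ℝ) (fun _ => T), w s) ML
        ≤ dist (((T:ℂ)^n)⁻¹ * ∫ s in Set.Icc (0 : Fin n → ℝ) (fun _ => T), w s)
            (((T:ℂ)^n)⁻¹ * ∫ s in Set.Icc (0 : Fin n → ℝ) (fun _ => T), p k s)
          + dist (((T:ℂ)^n)⁻¹ * ∫ s in Set.Icc (0 : Fin n → ℝ) (fun _ => T), p k s) (M k)
          + dist (M k) ML := dist_triangle4 _ _ _ _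
    _ < ε/3 + ε/3 + ε/3 := by
        exact add_lt_add (add_lt_add hfirst hTk) hk1
    _ = ε := by ring
  · -- line mean of w ∘ f
    unfold HasMeanValue1
    rw [Metric.tendsto_nhds]
    intro ε hε
    have hε3 : (0:ℝ) < ε/3 := by positivity
    have h1 : ∀ᶠ k : ℕ in atTop, dist (M k) ML < ε/3 :=
      Tendsto.eventually_lt_const hε3 (tendsto_iff_dist_tendsto_zero.mp hML)
    have h2 : ∀ᶠ k : ℕ in atTop, 1/((k:ℝ)+1) < ε/3 :=
      Tendsto.eventually_lt_const hε3 tendsto_one_div_add_atTop_nhds_zero_nat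
    obtain ⟨k, hk1, hk2⟩ := (h1.and h2).exists
    have h3 : ∀ᶠ T : ℝ in atTop, dist ((T:ℂ)⁻¹ *
        ∫ t in Set.Ioc (0:ℝ) T, p k (f t)) (M k) < ε/3 :=
      Tendsto.eventually_lt_const hε3 (tendsto_iff_dist_tendsto_zero.mp (hline k))
    filter_upwards [eventually_gt_atTop (0:ℝ), h3] with T hT hTk
    have hfirst : dist ((T:ℂ)⁻¹ * ∫ t in Set.Ioc (0:ℝ) T, w (f t))
        ((T:ℂ)⁻¹ * ∫ t in Set.Ioc (0:ℝ) T, p k (f t)) < ε/3 := by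
      rw [dist_eq_norm]
      exact lt_of_le_of_lt
        (avg_line_bound hT (hwline_int T) (hpline_int k T) fun t => hpw k (f t)) hk2
    calc dist ((T:ℂ)⁻¹ * ∫ t in Set.Ioc (0:ℝ) T, w (f t)) ML
        ≤ dist ((T:ℂ)⁻¹ * ∫ t in Set.Ioc (0:ℝ) T, w (f t))
            ((T:ℂ)⁻¹ * ∫ t in Set.Ioc (0:ℝ) T, p k (f t))
          + dist ((T:ℂ)⁻¹ * ∫ t in Set.Ioc (0:ℝ) T, p k (f t)) (M k)
          + dist (M k) ML := dist_triangle4 _ _ _ _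
    _ < ε/3 + ε/3 + ε/3 := add_lt_add (add_lt_add hfirst hTk) hk1
    _ = ε := by ring
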